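/- Let P be a Markov transition kernel on (X,B), μ a probability measure on (X,B), θ ∈ [0,1), and define the transition kernel Q(x,·) = θ P(x,·) + (1−θ) μ(·). Then the probability measure π_Q(A) = (1−θ) Σ_{i=0}^∞ θ^i (μP^i)(A) is well defined and is an invariant distribution for Q, i.e. ∫ π_Q(dx) Q(x,A) = π_Q(A) for all A ∈ B. -/

import Mathlib

set_option maxHeartbeats 800000


open MeasureTheory Filter
open scoped ENNReal

namespace MixtureKernelInvariant

variable {X : Type*} [MeasurableSpace X]

/-- `iter P n` is the `n`-step transition kernel `P^n`. -/
noncomputable def iter (P : X → Measure X) : ℕ → X → Measure X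
  | 0 => fun x => Measure.dirac x
  | n + 1 => fun x => (iter P n x).bind P

/-- The mixture kernel `Q(x,·) = θ P(x,·) + (1−θ) μ(·)`. -/
noncomputable def mixK (P : X → Measure X) (μ : Measure X) (θ : ℝ) : X → Measure X :=
  fun x => ENNReal.ofReal θ • P x + ENNReal.ofReal (1 - θ) • μ

/-- The measure `π_Q = (1−θ) Σ_{i=0}^∞ θ^i μP^i`. -/
noncomputable def piQ (P : X → Measure X) (μ : Measure X) (θ : ℝ) : Measure X :=
  ENNReal.ofReal (1 - θ) •
    Measure.sum (fun i : ℕ => ENNReal.ofReal θ ^ i • μ.bind (iter P i))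

lemma measurable_iter (P : X → Measure X) (hP : Measurable P) :
    ∀ n, Measurable (iter P n)
  | 0 => Measure.measurable_dirac
  | n + 1 => (Measure.measurable_bind' hP).comp (measurable_iter P hP n)

lemma iter_prob (P : X → Measure X) (hP : Measurable P)
    (hPprob : ∀ x, IsProbabilityMeasure (P x)) :
    ∀ n x, IsProbabilityMeasure (iter P n x)
  | 0, x => by simp [iter]; infer_instance
  | n + 1, x => by
    constructor
    rw [iter, Measure.bind_apply MeasurableSet.univ hP.aemeasurable]
    simp only [fun y => (hPprob y).measure_univ]
    rw [lintegral_one]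
    exact (iter_prob P hP hPprob n x).measure_univ

lemma bind_iter_prob (P : X → Measure X) (hP : Measurable P)
    (hPprob : ∀ x, IsProbabilityMeasure (P x))
    (μ : Measure X) (hμ : IsProbabilityMeasure μ) (n : ℕ) :
    IsProbabilityMeasure (μ.bind (iter P n)) := by
  constructor
  rw [Measure.bind_apply MeasurableSet.univ (measurable_iter P hP n).aemeasurable]
  simp only [fun x => (iter_prob P hP hPprob n x).measure_univ]
  rw [lintegral_one, hμ.measure_univ]

/-- Let `P` be a Markov transition kernel, `μ` a probability measure,
`θ ∈ [0,1)`, and `Q(x,·) = θ P(x,·) + (1−θ) μ(·)`.  Then the probability measure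
`π_Q = (1−θ) Σ_{i=0}^∞ θ^i (μP^i)` is well defined and is an invariant distribution for `Q`,
i.e. `∫ π_Q(dx) Q(x,A) = π_Q(A)` for all `A ∈ B`. -/
theorem piQ_isProbability_and_invariant
    (P : X → Measure X) (hPmeas : Measurable P)
    (hPprob : ∀ x, IsProbabilityMeasure (P x))
    (μ : Measure X) (hμ : IsProbabilityMeasure μ)
    (θ : ℝ) (hθ0 : 0 ≤ θ) (hθ1 : θ < 1) :
    IsProbabilityMeasure (piQ P μ θ) ∧
      (piQ P μ θ).bind (mixK P μ θ) = piQ P μ θ := by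
  set a : ℝ≥0∞ := ENNReal.ofReal θ with ha
  set b : ℝ≥0∞ := ENNReal.ofReal (1 - θ) with hb
  have hba : b = 1 - a := by
    rw [ha, hb, ← ENNReal.ofReal_one, ← ENNReal.ofReal_sub _ hθ0]
  have hb0 : b ≠ 0 := by
    rw [hb]; simpa using sub_pos.mpr hθ1
  have hbtop : b ≠ ∞ := ENNReal.ofReal_ne_top
  have ha1 : a < 1 := by
    rw [ha, ← ENNReal.ofReal_one]
    exact ENNReal.ofReal_lt_ofReal_iff_of_nonneg hθ0 |>.mpr hθ1
  have hatop : a ≠ ∞ := ENNReal.ofReal_ne_top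
  -- value of piQ on a measurable set
  have hpiQ_apply : ∀ s : Set X, MeasurableSet s →
      piQ P μ θ s = b * ∑' i : ℕ, a ^ i * (μ.bind (iter P i)) s := by
    intro s hs
    rw [piQ, Measure.smul_apply, Measure.sum_apply _ hs]
    simp [Measure.smul_apply, smul_eq_mul]; rfl
  have hprob : IsProbabilityMeasure (piQ P μ θ) := by
    constructor
    rw [hpiQ_apply _ MeasurableSet.univ]
    simp only [fun i => (bind_iter_prob P hPmeas hPprob μ hμ i).measure_univ]
    simp only [mul_one]
    rw [ENNReal.tsum_geometric, ← hba, ENNReal.mul_inv_cancel hb0 hbtop]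
  refine ⟨hprob, ?_⟩
  have hQmeas : Measurable (mixK P μ θ) := by
    apply Measure.measurable_of_measurable_coe
    intro t ht
    simp only [mixK, Measure.add_apply, Measure.smul_apply, smul_eq_mul]
    exact (((Measure.measurable_coe ht).comp hPmeas).const_mul a).add measurable_const
  ext s hs
  rw [Measure.bind_apply hs hQmeas.aemeasurable]
  have hPs : Measurable fun x => P x s := (Measure.measurable_coe hs).comp hPmeas
  have step1 : ∫⁻ x, (mixK P μ θ x) s ∂(piQ P μ θ)
      = a * ∫⁻ x, P x s ∂(piQ P μ θ) + b * μ s := by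
    simp only [mixK, Measure.add_apply, Measure.smul_apply, smul_eq_mul]
    rw [lintegral_add_left (hPs.const_mul a), lintegral_const_mul a hPs,
      lintegral_const, hprob.measure_univ, mul_one]
  rw [step1]
  have step2 : ∫⁻ x, P x s ∂(piQ P μ θ)
      = b * ∑' i : ℕ, a ^ i * (μ.bind (iter P (i + 1))) s := by
    rw [piQ, lintegral_smul_measure, lintegral_sum_measure]
    congr 1
    refine tsum_congr fun i => ?_
    rw [lintegral_smul_measure]
    congr 1
    have hbb : μ.bind (iter P (i + 1)) = (μ.bind (iter P i)).bind P := by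
      rw [Measure.bind_bind (measurable_iter P hPmeas i).aemeasurable hPmeas.aemeasurable]; rfl
    rw [hbb, Measure.bind_apply hs hPmeas.aemeasurable]
  rw [step2, hpiQ_apply s hs]
  -- now: a * (b * ∑' i, a^i * ν(i+1) s) + b * μ s = b * ∑' i, a^i * ν i s
  have hshift : ∑' i : ℕ, a ^ i * (μ.bind (iter P i)) s
      = (μ.bind (iter P 0)) s + ∑' i : ℕ, a ^ (i + 1) * (μ.bind (iter P (i + 1))) s := by
    rw [tsum_eq_zero_add' ENNReal.summable, pow_zero, one_mul]
  have h0 : (μ.bind (iter P 0)) s = μ s := by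
    have : μ.bind (iter P 0) = μ := by
      simp [iter, Measure.bind_dirac]
    rw [this]
  have hpow : ∑' i : ℕ, a ^ (i + 1) * (μ.bind (iter P (i + 1))) s
      = a * ∑' i : ℕ, a ^ i * (μ.bind (iter P (i + 1))) s := by
    rw [← ENNReal.tsum_mul_left]
    refine tsum_congr fun i => ?_
    ring
  rw [hshift, h0, hpow, mul_add]
  ring

end MixtureKernelInvariant
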